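/- Let d ≥ 1, let X be a compact metric space, let f : X → X be a homeomorphism, and let A be a continuous linear cocycle over f. Let S ⊆ X satisfy f(S) = S, and let P : S → (ℝ^d →L[ℝ] ℝ^d) satisfy P(x) ∘ P(x) = P(x) and A(x) ∘ P(x) = P(f x) ∘ A(x) for all x ∈ S; write E(x) = range P(x) and F(x) = ker P(x), and assume E(x) ≠ 0 and F(x) ≠ 0 for all x ∈ S. Suppose there exist an integer m ≥ 1 and λ ∈ (0,1) such that ‖A^m(x)|E(x)‖ · ‖A^{-m}(f^m x)|F(f^m x)‖ ≤ λ for every x ∈ S. Then sup_{x ∈ S} ‖P(x)‖ < ∞. -/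

import Mathlib

open Filter Topology MeasureTheory

noncomputable section

variable {X : Type*}

def cpow {d : ℕ} (f : X → X)
    (A : X → (EuclideanSpace ℝ (Fin d) →L[ℝ] EuclideanSpace ℝ (Fin d))) :
    ℕ → X → (EuclideanSpace ℝ (Fin d) →L[ℝ] EuclideanSpace ℝ (Fin d))
  | 0, _ => 1
  | n + 1, x => cpow f A n (f x) ∘L A x

def cIter {d : ℕ} [TopologicalSpace X] (f : X ≃ₜ X)
    (A : X → (EuclideanSpace ℝ (Fin d) →L[ℝ] EuclideanSpace ℝ (Fin d)))
    (n : ℤ) (x : X) : EuclideanSpace ℝ (Fin d) →L[ℝ] EuclideanSpace ℝ (Fin d) :=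
  if 0 ≤ n then cpow f A n.toNat x
  else Ring.inverse (cpow f A (-n).toNat ((f.symm : X → X)^[(-n).toNat] x))

def subNorm {d : ℕ} (T : EuclideanSpace ℝ (Fin d) →L[ℝ] EuclideanSpace ℝ (Fin d))
    (E : Submodule ℝ (EuclideanSpace ℝ (Fin d))) : ℝ :=
  ‖T ∘L E.subtypeL‖

namespace DSaux

variable {d : ℕ}

lemma norm_one_le' : ‖(1 : EuclideanSpace ℝ (Fin d) →L[ℝ] EuclideanSpace ℝ (Fin d))‖ ≤ 1 := by
  refine ContinuousLinearMap.opNorm_le_bound _ zero_le_one ?_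
  intro v
  rw [one_mul]
  exact le_of_eq rfl

@[simp] lemma one_comp' (T : EuclideanSpace ℝ (Fin d) →L[ℝ] EuclideanSpace ℝ (Fin d)) :
    (1 : EuclideanSpace ℝ (Fin d) →L[ℝ] EuclideanSpace ℝ (Fin d)) ∘L T = T := by
  ext v; rfl

@[simp] lemma comp_one' (T : EuclideanSpace ℝ (Fin d) →L[ℝ] EuclideanSpace ℝ (Fin d)) :
    T ∘L (1 : EuclideanSpace ℝ (Fin d) →L[ℝ] EuclideanSpace ℝ (Fin d)) = T := by
  ext v; rfl

lemma cpow_succ (f : X → X) (A : X → (EuclideanSpace ℝ (Fin d) →L[ℝ] EuclideanSpace ℝ (Fin d)))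
    (n : ℕ) (x : X) : cpow f A (n + 1) x = cpow f A n (f x) ∘L A x := rfl

lemma cpow_norm_le (f : X → X) (A : X → (EuclideanSpace ℝ (Fin d) →L[ℝ] EuclideanSpace ℝ (Fin d)))
    {M : ℝ} (hM1 : 1 ≤ M) (hM : ∀ y, ‖A y‖ ≤ M) (n : ℕ) (x : X) :
    ‖cpow f A n x‖ ≤ M ^ n := by
  induction n generalizing x with
  | zero => simpa only [cpow, pow_zero] using norm_one_le' (d := d)
  | succ n ih =>
    calc ‖cpow f A (n + 1) x‖ ≤ ‖cpow f A n (f x)‖ * ‖A x‖ :=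
          ContinuousLinearMap.opNorm_comp_le _ _
    _ ≤ M ^ n * M := by
        apply mul_le_mul (ih (f x)) (hM x) (norm_nonneg _)
        positivity
    _ = M ^ (n + 1) := by ring

lemma cpow_inverse (f : X → X) (A : X → (EuclideanSpace ℝ (Fin d) →L[ℝ] EuclideanSpace ℝ (Fin d)))
    (hAinv : ∀ x, IsUnit (A x)) {K : ℝ} (hK1 : 1 ≤ K)
    (hK : ∀ y, ‖Ring.inverse (A y)‖ ≤ K) (n : ℕ) (x : X) :
    Ring.inverse (cpow f A n x) ∘L cpow f A n x = 1 ∧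
      cpow f A n x ∘L Ring.inverse (cpow f A n x) = 1 ∧
      ‖Ring.inverse (cpow f A n x)‖ ≤ K ^ n := by
  suffices h : ∃ B, B ∘L cpow f A n x = 1 ∧ cpow f A n x ∘L B = 1 ∧ ‖B‖ ≤ K ^ n by
    obtain ⟨B, h1, h2, h3⟩ := h
    have hu : Ring.inverse (cpow f A n x) = B := by
      have : Ring.inverse ((⟨cpow f A n x, B, h2, h1⟩ : (EuclideanSpace ℝ (Fin d) →L[ℝ]
          EuclideanSpace ℝ (Fin d))ˣ) : EuclideanSpace ℝ (Fin d) →L[ℝ] EuclideanSpace ℝ (Fin d))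
          = B := Ring.inverse_unit _
      exact this
    rw [hu]; exact ⟨h1, h2, h3⟩
  induction n generalizing x with
  | zero =>
    refine ⟨1, by simp [cpow], by simp [cpow], by simpa only [pow_zero] using norm_one_le' (d := d)⟩
  | succ n ih =>
    obtain ⟨B, h1, h2, h3⟩ := ih (f x)
    have hA1 : A x ∘L Ring.inverse (A x) = 1 := Ring.mul_inverse_cancel _ (hAinv x)
    have hA2 : Ring.inverse (A x) ∘L A x = 1 := Ring.inverse_mul_cancel _ (hAinv x)
    refine ⟨Ring.inverse (A x) ∘L B, ?_, ?_, ?_⟩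
    · rw [cpow_succ]
      calc (Ring.inverse (A x) ∘L B) ∘L cpow f A n (f x) ∘L A x
          = Ring.inverse (A x) ∘L (B ∘L cpow f A n (f x)) ∘L A x := by
            simp [ContinuousLinearMap.comp_assoc]
        _ = 1 := by rw [h1, one_comp', hA2]
    · rw [cpow_succ]
      calc (cpow f A n (f x) ∘L A x) ∘L Ring.inverse (A x) ∘L B
          = cpow f A n (f x) ∘L (A x ∘L Ring.inverse (A x)) ∘L B := by
            simp [ContinuousLinearMap.comp_assoc]
        _ = 1 := by rw [hA1, one_comp', h2]
    · calc ‖Ring.inverse (A x) ∘L B‖ ≤ ‖Ring.inverse (A x)‖ * ‖B‖ :=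
          ContinuousLinearMap.opNorm_comp_le _ _
      _ ≤ K * K ^ n := by
          apply mul_le_mul (hK x) h3 (norm_nonneg _); positivity
      _ = K ^ (n + 1) := by ring

lemma cpow_comm (f : X → X) (A : X → (EuclideanSpace ℝ (Fin d) →L[ℝ] EuclideanSpace ℝ (Fin d)))
    (S : Set X) (hSmap : ∀ x ∈ S, f x ∈ S)
    (P : X → (EuclideanSpace ℝ (Fin d) →L[ℝ] EuclideanSpace ℝ (Fin d)))
    (hPinv : ∀ x ∈ S, A x ∘L P x = P (f x) ∘L A x) (n : ℕ) :
    ∀ x ∈ S, cpow f A n x ∘L P x = P (f^[n] x) ∘L cpow f A n x := by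
  induction n with
  | zero => intro x hx; simp only [cpow, Function.iterate_zero, id_eq, one_comp', comp_one']
  | succ n ih =>
    intro x hx
    rw [cpow_succ, ContinuousLinearMap.comp_assoc, hPinv x hx,
      ← ContinuousLinearMap.comp_assoc, ih (f x) (hSmap x hx),
      ContinuousLinearMap.comp_assoc, Function.iterate_succ_apply]

lemma mem_iterate (f : X → X) (S : Set X) (hSmap : ∀ x ∈ S, f x ∈ S) (n : ℕ) :
    ∀ x ∈ S, f^[n] x ∈ S := by
  induction n with
  | zero => intro x hx; simpa using hx
  | succ n ih => intro x hx; rw [Function.iterate_succ_apply]; exact ih _ (hSmap x hx)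

lemma subNorm_nonneg (T : EuclideanSpace ℝ (Fin d) →L[ℝ] EuclideanSpace ℝ (Fin d))
    (E : Submodule ℝ (EuclideanSpace ℝ (Fin d))) : 0 ≤ subNorm T E := norm_nonneg (T ∘L E.subtypeL)

lemma subNorm_le (T : EuclideanSpace ℝ (Fin d) →L[ℝ] EuclideanSpace ℝ (Fin d))
    (E : Submodule ℝ (EuclideanSpace ℝ (Fin d))) : subNorm T E ≤ ‖T‖ := by
  have h1 : ‖E.subtypeL‖ ≤ 1 := by
    refine ContinuousLinearMap.opNorm_le_bound _ zero_le_one ?_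
    intro v; simp
  calc subNorm T E ≤ ‖T‖ * ‖E.subtypeL‖ := ContinuousLinearMap.opNorm_comp_le _ _
  _ ≤ ‖T‖ * 1 := by
      exact mul_le_mul_of_nonneg_left h1 (norm_nonneg _)
  _ = ‖T‖ := mul_one _

lemma norm_apply_le_subNorm (T : EuclideanSpace ℝ (Fin d) →L[ℝ] EuclideanSpace ℝ (Fin d))
    (E : Submodule ℝ (EuclideanSpace ℝ (Fin d))) {u : EuclideanSpace ℝ (Fin d)} (hu : u ∈ E) :
    ‖T u‖ ≤ subNorm T E * ‖u‖ := by
  have := (T ∘L E.subtypeL).le_opNorm ⟨u, hu⟩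
  simpa [subNorm] using this

lemma exists_unit_vector {E : Submodule ℝ (EuclideanSpace ℝ (Fin d))} (hE : E ≠ ⊥) :
    ∃ u ∈ E, ‖u‖ = 1 := by
  obtain ⟨v, hv, hv0⟩ := Submodule.exists_mem_ne_zero_of_ne_bot hE
  refine ⟨‖v‖⁻¹ • v, E.smul_mem _ hv, ?_⟩
  rw [norm_smul, norm_inv, norm_norm, inv_mul_cancel₀ (norm_ne_zero_iff.mpr hv0)]

lemma key_ineq (c t de dg i w : ℝ) (hc0 : 0 ≤ c) (ht : 0 ≤ t) (h1c : 1 - c = t)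
    (hexp : w = de ^ 2 + 2 * i + dg ^ 2) (hlow : -(c * (de * dg)) ≤ i) :
    de ^ 2 * t ≤ w := by
  subst h1c
  nlinarith [mul_nonneg hc0 (sq_nonneg (de - dg)), mul_nonneg ht (sq_nonneg dg)]

lemma sqrt_bound (a b δ : ℝ) (ha : 0 ≤ a) (hb : 0 ≤ b) (hδ : 0 < δ)
    (h : a ^ 2 * (δ ^ 2 / 2) ≤ b ^ 2) : a ≤ Real.sqrt 2 / δ * b := by
  have h2 : a ^ 2 ≤ (Real.sqrt 2 / δ * b) ^ 2 := by
    have he : (Real.sqrt 2 / δ * b) ^ 2 = 2 / δ ^ 2 * b ^ 2 := by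
      rw [mul_pow, div_pow, Real.sq_sqrt (by norm_num : (0:ℝ) ≤ 2)]
    rw [he]
    calc a ^ 2 = 2 / δ ^ 2 * (a ^ 2 * (δ ^ 2 / 2)) := by field_simp
      _ ≤ 2 / δ ^ 2 * b ^ 2 := by
          apply mul_le_mul_of_nonneg_left h; positivity
  calc a = Real.sqrt (a ^ 2) := (Real.sqrt_sq ha).symm
    _ ≤ Real.sqrt ((Real.sqrt 2 / δ * b) ^ 2) := Real.sqrt_le_sqrt h2
    _ = Real.sqrt 2 / δ * b := Real.sqrt_sq (by positivity)

end DSaux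

open DSaux RealInnerProductSpace in
/-- Uniformly bounded angles along a dominated splitting ([2, Lemma II.9]): the
projections onto `E` along `F` are uniformly bounded in norm over the invariant set. -/
theorem dominated_splitting_bounded_projections {d : ℕ} (hd : 1 ≤ d)
    [MetricSpace X] [CompactSpace X] (f : X ≃ₜ X)
    (A : X → (EuclideanSpace ℝ (Fin d) →L[ℝ] EuclideanSpace ℝ (Fin d)))
    (hAcont : Continuous A) (hAinv : ∀ x, IsUnit (A x))
    (S : Set X) (hS : (f : X → X) '' S = S)
    (P : X → (EuclideanSpace ℝ (Fin d) →L[ℝ] EuclideanSpace ℝ (Fin d)))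
    (hPproj : ∀ x ∈ S, P x ∘L P x = P x)
    (hPinv : ∀ x ∈ S, A x ∘L P x = P (f x) ∘L A x)
    (hE : ∀ x ∈ S, LinearMap.range (P x : EuclideanSpace ℝ (Fin d) →ₗ[ℝ] EuclideanSpace ℝ (Fin d)) ≠ ⊥)
    (hF : ∀ x ∈ S, LinearMap.ker (P x : EuclideanSpace ℝ (Fin d) →ₗ[ℝ] EuclideanSpace ℝ (Fin d)) ≠ ⊥)
    (m : ℕ) (hm : 1 ≤ m) (lam : ℝ) (hlam : lam ∈ Set.Ioo (0 : ℝ) 1)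
    (hdom : ∀ x ∈ S,
      subNorm (cIter f A (m : ℤ) x) (LinearMap.range (P x : EuclideanSpace ℝ (Fin d) →ₗ[ℝ] EuclideanSpace ℝ (Fin d))) *
        subNorm (cIter f A (-(m : ℤ)) ((f : X → X)^[m] x))
          (LinearMap.ker (P ((f : X → X)^[m] x) : EuclideanSpace ℝ (Fin d) →ₗ[ℝ] EuclideanSpace ℝ (Fin d))) ≤ lam) :
    ∃ C : ℝ, ∀ x ∈ S, ‖P x‖ ≤ C := by
  obtain ⟨hlam0, hlam1⟩ := hlam
  -- uniform bounds on the cocycle and its inverse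
  obtain ⟨M₀, hM₀⟩ := (isCompact_range hAcont.norm).bddAbove
  set M : ℝ := max M₀ 1 with hMdef
  have hM1 : (1 : ℝ) ≤ M := le_max_right _ _
  have hM : ∀ y, ‖A y‖ ≤ M := fun y => le_trans (hM₀ ⟨y, rfl⟩) (le_max_left _ _)
  have hinvcont : Continuous fun x => Ring.inverse (A x) := by
    rw [continuous_iff_continuousAt]
    intro x
    have h := NormedRing.inverse_continuousAt (hAinv x).unit
    rw [(hAinv x).unit_spec] at h
    exact h.comp hAcont.continuousAt
  obtain ⟨K₀, hK₀⟩ := (isCompact_range hinvcont.norm).bddAbove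
  set K : ℝ := max K₀ 1 with hKdef
  have hK1 : (1 : ℝ) ≤ K := le_max_right _ _
  have hK : ∀ y, ‖Ring.inverse (A y)‖ ≤ K := fun y => le_trans (hK₀ ⟨y, rfl⟩) (le_max_left _ _)
  have hM0 : (0 : ℝ) < M := lt_of_lt_of_le one_pos hM1
  have hK0 : (0 : ℝ) < K := lt_of_lt_of_le one_pos hK1
  -- invariance of S
  have hSmap : ∀ x ∈ S, (f : X → X) x ∈ S := fun x hx => hS ▸ Set.mem_image_of_mem _ hx
  -- the constants
  set δ : ℝ := (1 - lam) / (K ^ m * M ^ m) with hδdef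
  have hδ0 : 0 < δ := by
    apply div_pos (by linarith)
    positivity
  set c : ℝ := 1 - δ ^ 2 / 2 with hcdef
  set C : ℝ := Real.sqrt 2 / δ with hCdef
  refine ⟨C, fun x hx => ?_⟩
  set y := (f : X → X)^[m] x with hydef
  have hy : y ∈ S := mem_iterate (f : X → X) S hSmap m x hx
  set Ex := LinearMap.range (P x : EuclideanSpace ℝ (Fin d) →ₗ[ℝ] EuclideanSpace ℝ (Fin d)) with hExdef
  set Fx := LinearMap.ker (P x : EuclideanSpace ℝ (Fin d) →ₗ[ℝ] EuclideanSpace ℝ (Fin d)) with hFxdef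
  set Fy := LinearMap.ker (P y : EuclideanSpace ℝ (Fin d) →ₗ[ℝ] EuclideanSpace ℝ (Fin d)) with hFydef
  set T := cpow (f : X → X) A m x with hTdef
  set B := Ring.inverse T with hBdef
  -- rewrite the domination hypothesis
  have hiter1 : cIter f A (m : ℤ) x = T := by
    rw [cIter, if_pos (by exact_mod_cast Nat.zero_le m), Int.toNat_natCast]
  have hiter2 : cIter f A (-(m : ℤ)) y = B := by
    have h1m : (1 : ℤ) ≤ (m : ℤ) := by exact_mod_cast hm
    have h2 : (-(-(m : ℤ))).toNat = m := by simp
    have harg : (f.symm : X → X)^[m] ((f : X → X)^[m] x) = x :=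
      (Function.LeftInverse.iterate (fun z => f.symm_apply_apply z) m) x
    rw [cIter, if_neg (by omega), h2, hydef, harg, ← hTdef]
  have hab : subNorm T Ex * subNorm B Fy ≤ lam := by
    have := hdom x hx
    rwa [hiter1, hiter2] at this
  obtain ⟨hB1, hB2, hB3⟩ := cpow_inverse (f : X → X) A hAinv hK1 hK m x
  rw [← hTdef, ← hBdef] at hB1 hB2 hB3
  have hcomm := cpow_comm (f : X → X) A S hSmap P hPinv m x hx
  rw [← hTdef, ← hydef] at hcomm
  have hTnorm : ‖T‖ ≤ M ^ m := hTdef ▸ cpow_norm_le (f : X → X) A hM1 hM m x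
  set a : ℝ := subNorm T Ex with hadef
  set b : ℝ := subNorm B Fy with hbdef
  have ha0 : 0 ≤ a := hadef ▸ subNorm_nonneg T Ex
  have hbK : b ≤ K ^ m := le_trans (subNorm_le B Fy) hB3
  -- the angle bound
  have hangle : ∀ u v : EuclideanSpace ℝ (Fin d), u ∈ Ex → v ∈ Fx →
      ‖u‖ = 1 → ‖v‖ = 1 → δ ≤ ‖u - v‖ := by
    intro u v hu hv hu1 hv1
    have h1 : ‖T u‖ ≤ a := by
      have := norm_apply_le_subNorm T Ex hu
      rwa [hu1, mul_one] at this
    have hv' : T v ∈ Fy := by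
      have h0 : P x v = 0 := hv
      have hcv : P y (T v) = T (P x v) := by
        have := congrArg (fun (L : EuclideanSpace ℝ (Fin d) →L[ℝ] EuclideanSpace ℝ (Fin d)) =>
          L v) hcomm
        simpa only [ContinuousLinearMap.comp_apply] using this.symm
      rw [hFydef, LinearMap.mem_ker, ContinuousLinearMap.coe_coe, hcv, h0, map_zero]
    have h3 : (1 : ℝ) ≤ b * ‖T v‖ := by
      have hid : B (T v) = v := by
        have := congrArg (fun (L : EuclideanSpace ℝ (Fin d) →L[ℝ] EuclideanSpace ℝ (Fin d)) =>
          L v) hB1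
        simpa using this
      calc (1 : ℝ) = ‖v‖ := hv1.symm
        _ = ‖B (T v)‖ := by rw [hid]
        _ ≤ b * ‖T v‖ := norm_apply_le_subNorm B Fy hv'
    have hb0 : 0 < b := by
      rcases lt_or_ge 0 b with h | h
      · exact h
      · exfalso
        have : b * ‖T v‖ ≤ 0 := mul_nonpos_of_nonpos_of_nonneg h (norm_nonneg _)
        linarith
    have hcuv : ‖T v‖ - ‖T u‖ ≤ ‖T (u - v)‖ := by
      have : ‖T v‖ - ‖T u‖ ≤ ‖T v - T u‖ := norm_sub_norm_le _ _
      rwa [norm_sub_rev, ← map_sub] at this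
    have hle : ‖T (u - v)‖ ≤ M ^ m * ‖u - v‖ :=
      le_trans (T.le_opNorm _) (mul_le_mul_of_nonneg_right hTnorm (norm_nonneg _))
    rw [hδdef, div_le_iff₀ (by positivity)]
    have hMm0 : (0 : ℝ) < M ^ m := by positivity
    nlinarith [norm_nonneg (u - v), mul_le_mul_of_nonneg_left hle hb0.le,
      mul_le_mul_of_nonneg_right hbK (mul_nonneg hMm0.le (norm_nonneg (u - v)))]
  -- the angle bound gives δ ≤ √2, hence 0 ≤ c
  obtain ⟨u0, hu0, hu0n⟩ := exists_unit_vector (hE x hx)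
  obtain ⟨v0, hv0, hv0n⟩ := exists_unit_vector (hF x hx)
  have hδa : δ ≤ ‖u0 - v0‖ := hangle u0 v0 hu0 hv0 hu0n hv0n
  have hδb : δ ≤ ‖u0 + v0‖ := by
    have := hangle u0 (-v0) hu0 (Fx.neg_mem hv0) hu0n (by rw [norm_neg, hv0n])
    rwa [sub_neg_eq_add] at this
  have hc0 : 0 ≤ c := by
    have e1 := norm_sub_sq_real u0 v0
    have e2 := norm_add_sq_real u0 v0
    have p1 : δ ^ 2 ≤ ‖u0 - v0‖ ^ 2 := pow_le_pow_left₀ hδ0.le hδa 2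
    have p2 : δ ^ 2 ≤ ‖u0 + v0‖ ^ 2 := pow_le_pow_left₀ hδ0.le hδb 2
    rw [hu0n, hv0n] at e1 e2
    rw [hcdef]
    linarith only [p1, p2, e1, e2]
  -- inner product bound
  have hinner : ∀ e ∈ Ex, ∀ g ∈ Fx, |(inner ℝ e g : ℝ)| ≤ c * (‖e‖ * ‖g‖) := by
    intro e he g hg
    rcases eq_or_ne e 0 with rfl | he0
    · simp
    rcases eq_or_ne g 0 with rfl | hg0
    · simp
    have hen : (0 : ℝ) < ‖e‖ := norm_pos_iff.mpr he0
    have hgn : (0 : ℝ) < ‖g‖ := norm_pos_iff.mpr hg0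
    set u := ‖e‖⁻¹ • e with hudef
    set v := ‖g‖⁻¹ • g with hvdef
    have hun : ‖u‖ = 1 := by
      rw [hudef, norm_smul, norm_inv, norm_norm, inv_mul_cancel₀ hen.ne']
    have hvn : ‖v‖ = 1 := by
      rw [hvdef, norm_smul, norm_inv, norm_norm, inv_mul_cancel₀ hgn.ne']
    have hum : u ∈ Ex := Ex.smul_mem _ he
    have hvm : v ∈ Fx := Fx.smul_mem _ hg
    have h1 : δ ≤ ‖u - v‖ := hangle u v hum hvm hun hvn
    have h2 : δ ≤ ‖u + v‖ := by
      have := hangle u (-v) hum (Fx.neg_mem hvm) hun (by rw [norm_neg, hvn])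
      rwa [sub_neg_eq_add] at this
    have e1 := norm_sub_sq_real u v
    have e2 := norm_add_sq_real u v
    have p1 : δ ^ 2 ≤ ‖u - v‖ ^ 2 := pow_le_pow_left₀ hδ0.le h1 2
    have p2 : δ ^ 2 ≤ ‖u + v‖ ^ 2 := pow_le_pow_left₀ hδ0.le h2 2
    rw [hun, hvn] at e1 e2
    have huv : |(inner ℝ u v : ℝ)| ≤ c := by
      rw [abs_le, hcdef]
      constructor
      · linarith only [p2, e2]
      · linarith only [p1, e1]
    have hId : (inner ℝ u v : ℝ) = ‖e‖⁻¹ * (‖g‖⁻¹ * (inner ℝ e g : ℝ)) := by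
      rw [hudef, hvdef, real_inner_smul_left, real_inner_smul_right]
    have hegId : (inner ℝ e g : ℝ) = ‖e‖ * ‖g‖ * (inner ℝ u v : ℝ) := by
      rw [hId]; field_simp
    rw [hegId, abs_mul, abs_mul, abs_of_nonneg hen.le, abs_of_nonneg hgn.le, mul_comm c]
    exact mul_le_mul_of_nonneg_left huv (by positivity)
  -- conclude : the projection norm is bounded
  have hC0 : 0 ≤ C := div_nonneg (Real.sqrt_nonneg 2) hδ0.le
  refine ContinuousLinearMap.opNorm_le_bound _ hC0 ?_
  intro w
  set e := P x w with hedef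
  set g := w - e with hgdef
  have he : e ∈ Ex := ⟨w, rfl⟩
  have hg : g ∈ Fx := by
    rw [hFxdef, LinearMap.mem_ker, ContinuousLinearMap.coe_coe, hgdef, map_sub, hedef]
    have := congrArg (fun (L : EuclideanSpace ℝ (Fin d) →L[ℝ] EuclideanSpace ℝ (Fin d)) =>
      L w) (hPproj x hx)
    have h2 : P x (P x w) = P x w := by simpa using this
    rw [h2, sub_self]
  have hw : w = e + g := by rw [hgdef]; abel
  have hin := hinner e he g hg
  have hlow : -(c * (‖e‖ * ‖g‖)) ≤ (inner ℝ e g : ℝ) := (abs_le.mp hin).1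
  have hexp : ‖w‖ ^ 2 = ‖e‖ ^ 2 + 2 * (inner ℝ e g : ℝ) + ‖g‖ ^ 2 := by
    rw [hw]; exact norm_add_sq_real e g
  have key : ‖e‖ ^ 2 * (δ ^ 2 / 2) ≤ ‖w‖ ^ 2 := by
    refine key_ineq c (δ ^ 2 / 2) ‖e‖ ‖g‖ (inner ℝ e g) (‖w‖ ^ 2) hc0 (by positivity) ?_ hexp hlow
    rw [hcdef]; ring
  calc ‖P x w‖ = ‖e‖ := rfl
    _ ≤ Real.sqrt 2 / δ * ‖w‖ := sqrt_bound ‖e‖ ‖w‖ δ (norm_nonneg _) (norm_nonneg _) hδ0 key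
    _ = C * ‖w‖ := by rw [hCdef]
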